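/- Let k > 0 and let a_i, b_i, c_i (i = 1,2,3) be real numbers. Define X(u) = a₁ + b₁cos(ku) + c₁sin(ku), Y(v) = a₂ + b₂cos(kv) + c₂sin(kv), Z(w) = a₃ + b₃cos(kw) + c₃sin(kw). Then (Y(v) − Z(w))X'(u) + (X(u) − Z(w))Y'(v) − (X(u) + Y(v))Z'(w) = 0 holds for all (u,v,w) with u+v+w = 0 if and only if the following six equations hold: (a₂−a₃)c₁ − b₃c₂ − b₂c₃ = 0; (a₁−a₃)c₂ − b₃c₁ − b₁c₃ = 0; (a₂−a₃)b₁ + b₂b₃ − c₂c₃ = 0; (a₁−a₃)b₂ + b₁b₃ − c₁c₃ = 0; (a₁+a₂)b₃ + b₁b₂ − c₁c₂ = 0; (a₁+a₂)c₃ − b₂c₁ − b₁c₂ = 0. -/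

import Mathlib

/-- The trigonometric ansatz `a + b·cos(ku) + c·sin(ku)` (case `K = −k² < 0`). -/
noncomputable def trigAnsatz (a b c k : ℝ) : ℝ → ℝ :=
  fun u => a + b * Real.cos (k * u) + c * Real.sin (k * u)

lemma deriv_trigAnsatz (a b c k u : ℝ) :
    deriv (trigAnsatz a b c k) u
      = k * (c * Real.cos (k * u) - b * Real.sin (k * u)) := by
  have hku : HasDerivAt (fun x : ℝ => k * x) k u := by
    simpa using (hasDerivAt_id u).const_mul k
  have hc : HasDerivAt (fun x : ℝ => Real.cos (k * x)) (-Real.sin (k * u) * k) u :=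
    (Real.hasDerivAt_cos (k * u)).comp u hku
  have hs : HasDerivAt (fun x : ℝ => Real.sin (k * x)) (Real.cos (k * u) * k) u :=
    (Real.hasDerivAt_sin (k * u)).comp u hku
  have h : HasDerivAt (trigAnsatz a b c k)
      (b * (-Real.sin (k * u) * k) + c * (Real.cos (k * u) * k)) u := by
    unfold trigAnsatz; simpa [Pi.add_def] using ((hasDerivAt_const u a).add (hc.const_mul b)).add (hs.const_mul c)
  rw [h.deriv]; ring

theorem stmt_6 (k a₁ b₁ c₁ a₂ b₂ c₂ a₃ b₃ c₃ : ℝ) (hk : 0 < k) :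
    (∀ u v w : ℝ, u + v + w = 0 →
      (trigAnsatz a₂ b₂ c₂ k v - trigAnsatz a₃ b₃ c₃ k w) * deriv (trigAnsatz a₁ b₁ c₁ k) u
        + (trigAnsatz a₁ b₁ c₁ k u - trigAnsatz a₃ b₃ c₃ k w) * deriv (trigAnsatz a₂ b₂ c₂ k) v
        - (trigAnsatz a₁ b₁ c₁ k u + trigAnsatz a₂ b₂ c₂ k v) * deriv (trigAnsatz a₃ b₃ c₃ k) w
        = 0)
    ↔ ((a₂ - a₃) * c₁ - b₃ * c₂ - b₂ * c₃ = 0 ∧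
       (a₁ - a₃) * c₂ - b₃ * c₁ - b₁ * c₃ = 0 ∧
       (a₂ - a₃) * b₁ + b₂ * b₃ - c₂ * c₃ = 0 ∧
       (a₁ - a₃) * b₂ + b₁ * b₃ - c₁ * c₃ = 0 ∧
       (a₁ + a₂) * b₃ + b₁ * b₂ - c₁ * c₂ = 0 ∧
       (a₁ + a₂) * c₃ - b₂ * c₁ - b₁ * c₂ = 0) := by
  have main : ∀ u v w : ℝ, u + v + w = 0 →
      (trigAnsatz a₂ b₂ c₂ k v - trigAnsatz a₃ b₃ c₃ k w) * deriv (trigAnsatz a₁ b₁ c₁ k) u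
        + (trigAnsatz a₁ b₁ c₁ k u - trigAnsatz a₃ b₃ c₃ k w) * deriv (trigAnsatz a₂ b₂ c₂ k) v
        - (trigAnsatz a₁ b₁ c₁ k u + trigAnsatz a₂ b₂ c₂ k v) * deriv (trigAnsatz a₃ b₃ c₃ k) w
      = k * (((a₂ - a₃) * c₁ - b₃ * c₂ - b₂ * c₃) * Real.cos (k * u)
           + ((a₁ - a₃) * c₂ - b₃ * c₁ - b₁ * c₃) * Real.cos (k * v)
           - ((a₂ - a₃) * b₁ + b₂ * b₃ - c₂ * c₃) * Real.sin (k * u)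
           - ((a₁ - a₃) * b₂ + b₁ * b₃ - c₁ * c₃) * Real.sin (k * v)
           - ((a₁ + a₂) * b₃ + b₁ * b₂ - c₁ * c₂) * Real.sin (k * u + k * v)
           - ((a₁ + a₂) * c₃ - b₂ * c₁ - b₁ * c₂) * Real.cos (k * u + k * v)) := by
    intro u v w huvw
    have hw : w = -u - v := by linarith
    subst hw
    rw [deriv_trigAnsatz, deriv_trigAnsatz, deriv_trigAnsatz]
    simp only [trigAnsatz, show k * (-u - v) = -(k * u + k * v) by ring,
      Real.cos_neg, Real.sin_neg, Real.cos_add, Real.sin_add]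
    linear_combination
      (k * ((c₂ * c₃ - b₂ * b₃) * Real.sin (k * u) - (c₂ * b₃ + b₂ * c₃) * Real.cos (k * u)))
        * Real.sin_sq_add_cos_sq (k * v)
      + (k * ((c₁ * c₃ - b₁ * b₃) * Real.sin (k * v) - (c₁ * b₃ + b₁ * c₃) * Real.cos (k * v)))
        * Real.sin_sq_add_cos_sq (k * u)
  constructor
  · intro h
    have H : ∀ s t : ℝ,
        ((a₂ - a₃) * c₁ - b₃ * c₂ - b₂ * c₃) * Real.cos s
          + ((a₁ - a₃) * c₂ - b₃ * c₁ - b₁ * c₃) * Real.cos t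
          - ((a₂ - a₃) * b₁ + b₂ * b₃ - c₂ * c₃) * Real.sin s
          - ((a₁ - a₃) * b₂ + b₁ * b₃ - c₁ * c₃) * Real.sin t
          - ((a₁ + a₂) * b₃ + b₁ * b₂ - c₁ * c₂) * Real.sin (s + t)
          - ((a₁ + a₂) * c₃ - b₂ * c₁ - b₁ * c₂) * Real.cos (s + t) = 0 := by
      intro s t
      have hks : k * (s / k) = s := by field_simp
      have hkt : k * (t / k) = t := by field_simp
      have hsum : s / k + t / k + (-(s + t) / k) = 0 := by field_simp; ring
      have h1 := h (s / k) (t / k) (-(s + t) / k) hsum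
      rw [main (s / k) (t / k) (-(s + t) / k) hsum] at h1
      rw [hks, hkt] at h1
      exact (mul_eq_zero.mp h1).resolve_left hk.ne'
    have P1 := H 0 0
    have P2 := H Real.pi 0
    have P3 := H 0 Real.pi
    have P4 := H (Real.pi / 2) 0
    have P5 := H 0 (Real.pi / 2)
    have P6 := H (Real.pi / 2) (Real.pi / 2)
    rw [show (Real.pi / 2 + Real.pi / 2 : ℝ) = Real.pi by ring] at P6
    simp [Real.sin_pi, Real.cos_pi, Real.sin_pi_div_two, Real.cos_pi_div_two] at P1 P2 P3 P4 P5 P6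
    refine ⟨by linarith, by linarith, by linarith, by linarith, by linarith, by linarith⟩
  · rintro ⟨h1, h2, h3, h4, h5, h6⟩ u v w huvw
    rw [main u v w huvw, h1, h2, h3, h4, h5, h6]
    ring
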